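/- (One-step decrease, regime p1.) Let f1 ∈ F_{μ1,L1} and f2 ∈ F_{μ2,L2} with L1 ≥ L2 > μ1 ≥ 0 and μ2 < L2, and assume either μ2 ≥ 0, or μ1 > −μ2 > 0 together with 1/μ1 + 1/μ2 + 1/L2 ≤ (1/L1)·(2 + L2/μ2). Let F := f1 − f2 and consider a DCA step from x to x⁺ with g2 ∈ ∂f2(x), g1⁺ ∈ ∂f1(x⁺), g1⁺ = g2, and let g1 ∈ ∂f1(x), g2⁺ ∈ ∂f2(x⁺). Then F(x) − F(x⁺) ≥ σ·(1/2)‖g1 − g2‖² + σ⁺·(1/2)‖g1⁺ − g2⁺‖², where σ = (L2 − μ1)/(L2(L1 − μ1)) and σ⁺ = (1/L2)·(1 + μ1(L1 − L2)/(L2(L1 − μ1))). -/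

import Mathlib

open RealInnerProductSpace

variable {H : Type*} [NormedAddCommGroup H] [InnerProductSpace ℝ H]

/-- `f` has lower curvature `μ`, i.e. `f - (μ/2)‖·‖²` is convex. -/
def HasLowerCurvature (μ : ℝ) (f : H → ℝ) : Prop :=
  ConvexOn ℝ Set.univ fun x => f x - μ / 2 * ‖x‖ ^ 2

/-- `f` has upper curvature `L`, i.e. `(L/2)‖·‖² - f` is convex. -/
def HasUpperCurvature (L : ℝ) (f : H → ℝ) : Prop :=
  ConvexOn ℝ Set.univ fun x => L / 2 * ‖x‖ ^ 2 - f x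

/-- `g` is a subgradient of `f` (of lower curvature `μ`) at `x`. -/
def IsSubgradient (μ : ℝ) (f : H → ℝ) (x g : H) : Prop :=
  ∀ y, f y ≥ f x + ⟪g, y - x⟫ + μ / 2 * ‖y - x‖ ^ 2

/-- Descent lemma: upper curvature plus a subgradient gives a quadratic upper bound. -/
lemma descent_aux {L μ : ℝ} {f : H → ℝ} (hup : HasUpperCurvature L f)
    (hμL : μ ≤ L) {y g : H} (hg : IsSubgradient μ f y g) (z : H) :
    f z ≤ f y + ⟪g, z - y⟫ + L / 2 * ‖z - y‖ ^ 2 := by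
  have key : ∀ t : ℝ, 0 < t →
      f z ≤ f y + ⟪g, z - y⟫ + L / 2 * ‖z - y‖ ^ 2 + t * ((L - μ) / 2 * ‖z - y‖ ^ 2) := by
    intro t ht
    have h1t : (0:ℝ) < 1 + t := by linarith
    set w := y - t • (z - y) with hw
    have hcomb : (t / (1 + t)) • z + (1 / (1 + t)) • w = y := by
      rw [hw]
      match_scalars <;> field_simp <;> ring
    have hcv := hup.2 (Set.mem_univ z) (Set.mem_univ w)
        (show (0:ℝ) ≤ t / (1 + t) from div_nonneg ht.le h1t.le)
        (show (0:ℝ) ≤ 1 / (1 + t) from div_nonneg one_pos.le h1t.le)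
        (show t / (1 + t) + 1 / (1 + t) = 1 by field_simp; ring)
    rw [hcomb] at hcv
    simp only [smul_eq_mul] at hcv
    have hsb := hg w
    have hwy : w - y = -(t • (z - y)) := by rw [hw]; abel
    have e1 : ⟪g, w - y⟫ = -(t * ⟪g, z - y⟫) := by
      rw [hwy, inner_neg_right, real_inner_smul_right]
    have e2 : ‖w - y‖ ^ 2 = t ^ 2 * ‖z - y‖ ^ 2 := by
      rw [hwy, norm_neg, norm_smul, Real.norm_eq_abs, mul_pow, sq_abs]
    have e3 : ‖w‖ ^ 2 = ‖y‖ ^ 2 - 2 * (t * ⟪y, z - y⟫) + t ^ 2 * ‖z - y‖ ^ 2 := by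
      rw [hw, norm_sub_sq_real, real_inner_smul_right, norm_smul, Real.norm_eq_abs,
        mul_pow, sq_abs]
    have ezy : y + (z - y) = z := by abel
    have e4 : ‖z‖ ^ 2 = ‖y‖ ^ 2 + 2 * ⟪y, z - y⟫ + ‖z - y‖ ^ 2 := by
      have := norm_add_sq_real y (z - y)
      rw [ezy] at this
      linarith
    rw [e1, e2] at hsb
    have hcv2 : (1 + t) * (L / 2 * ‖y‖ ^ 2 - f y) ≤
        t * (L / 2 * ‖z‖ ^ 2 - f z) + (L / 2 * ‖w‖ ^ 2 - f w) := by
      have h := mul_le_mul_of_nonneg_left hcv h1t.le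
      have heq : (1 + t) * (t / (1 + t) * (L / 2 * ‖z‖ ^ 2 - f z)
          + 1 / (1 + t) * (L / 2 * ‖w‖ ^ 2 - f w)) =
          t * (L / 2 * ‖z‖ ^ 2 - f z) + (L / 2 * ‖w‖ ^ 2 - f w) := by
        field_simp
      linarith [h, heq.ge]
    rw [e3, e4] at hcv2
    have tkey : t * (f z) ≤ t * (f y + ⟪g, z - y⟫ + L / 2 * ‖z - y‖ ^ 2
        + t * ((L - μ) / 2 * ‖z - y‖ ^ 2)) := by nlinarith [hcv2, hsb]
    exact le_of_mul_le_mul_left tkey ht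
  apply le_of_forall_pos_le_add
  intro ε hε
  rcases eq_or_lt_of_le (mul_nonneg (by linarith : (0:ℝ) ≤ (L - μ) / 2) (sq_nonneg ‖z - y‖))
    with hC | hC
  · have := key 1 one_pos
    rw [← hC] at this
    linarith
  · have := key (ε / ((L - μ) / 2 * ‖z - y‖ ^ 2)) (div_pos hε hC)
    rw [div_mul_cancel₀ _ hC.ne'] at this
    linarith

/-- Interpolation inequality for functions with curvature in `[μ, L]`. -/
lemma interp_aux {L μ : ℝ} {f : H → ℝ} (hμL : μ < L) (hup : HasUpperCurvature L f)
    {a b ga gb : H} (hga : IsSubgradient μ f a ga) (hgb : IsSubgradient μ f b gb) :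
    f a ≥ f b + ⟪gb, a - b⟫ + μ / 2 * ‖a - b‖ ^ 2
      + 1 / (2 * (L - μ)) * ‖ga - gb - μ • (a - b)‖ ^ 2 := by
  have hK : (0:ℝ) < L - μ := sub_pos.2 hμL
  set w := ga - gb - μ • (a - b) with hwdef
  set c := a - (L - μ)⁻¹ • w with hcdef
  have h1 := descent_aux hup hμL.le hga c
  have h2 := hgb c
  have eca : c - a = -((L - μ)⁻¹ • w) := by rw [hcdef]; abel
  have ecb : c - b = (a - b) - (L - μ)⁻¹ • w := by rw [hcdef]; abel
  have f1 : ⟪ga, c - a⟫ = -((L - μ)⁻¹ * ⟪ga, w⟫) := by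
    rw [eca, inner_neg_right, real_inner_smul_right]
  have f2 : ‖c - a‖ ^ 2 = (L - μ)⁻¹ ^ 2 * ‖w‖ ^ 2 := by
    rw [eca, norm_neg, norm_smul, Real.norm_eq_abs, mul_pow, sq_abs]
  have f3 : ⟪gb, c - b⟫ = ⟪gb, a - b⟫ - (L - μ)⁻¹ * ⟪gb, w⟫ := by
    rw [ecb, inner_sub_right, real_inner_smul_right]
  have f4 : ‖c - b‖ ^ 2 = ‖a - b‖ ^ 2 - 2 * ((L - μ)⁻¹ * ⟪a - b, w⟫)
      + (L - μ)⁻¹ ^ 2 * ‖w‖ ^ 2 := by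
    rw [ecb, norm_sub_sq_real, real_inner_smul_right, norm_smul, Real.norm_eq_abs,
      mul_pow, sq_abs]
  have f5 : ⟪ga, w⟫ - ⟪gb, w⟫ = ‖w‖ ^ 2 + μ * ⟪a - b, w⟫ := by
    have hgagb : ga - gb = w + μ • (a - b) := by rw [hwdef]; abel
    have : ⟪ga - gb, w⟫ = ⟪w + μ • (a - b), w⟫ := by rw [hgagb]
    rw [inner_sub_left, inner_add_left, real_inner_smul_left,
      real_inner_self_eq_norm_sq] at this
    linarith [this]
  rw [f1, f2] at h1
  rw [f3, f4] at h2
  have f5' : (L - μ)⁻¹ * ⟪ga, w⟫ - (L - μ)⁻¹ * ⟪gb, w⟫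
      = (L - μ)⁻¹ * ‖w‖ ^ 2 + (L - μ)⁻¹ * (μ * ⟪a - b, w⟫) := by
    rw [← mul_sub, f5]; ring
  have hsplit : L / 2 * ((L - μ)⁻¹ ^ 2 * ‖w‖ ^ 2)
      = 1 / 2 * ((L - μ)⁻¹ * ‖w‖ ^ 2) + μ / 2 * ((L - μ)⁻¹ ^ 2 * ‖w‖ ^ 2) := by
    field_simp
    ring
  have hgoal : 1 / (2 * (L - μ)) * ‖w‖ ^ 2 = 1 / 2 * ((L - μ)⁻¹ * ‖w‖ ^ 2) := by
    field_simp
  rw [hgoal]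
  linarith [h1, h2, f5', hsplit]

/-- Purely scalar combination step. -/
lemma combine_aux (mu1 mu2 L1 L2 U A B P Q G F1x F1p F2x F2p : ℝ)
    (hL2 : 0 < L2) (hD1 : 0 < L1 - mu1) (hD2 : 0 < L2 - mu2)
    (hmu1 : 0 ≤ mu1) (hL12 : L2 ≤ L1)
    (hN : 0 ≤ mu1 * (L1 - L2) * (L2 + mu2) + mu2 * L2 * (L1 - mu1))
    (hS1 : 0 ≤ A - 2 * (L2 * P) + L2 ^ 2 * U)
    (hS2 : 0 ≤ B - 2 * (L2 * Q) + L2 ^ 2 * U)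
    (r1 : F1x ≥ F1p + G + mu1 / 2 * U + 1 / (2 * (L1 - mu1)) * (A - 2 * (mu1 * P) + mu1 ^ 2 * U))
    (r2 : F2p ≥ F2x + -G + mu2 / 2 * U + 1 / (2 * (L2 - mu2)) * (B - 2 * (mu2 * Q) + mu2 ^ 2 * U))
    (r3 : F2x ≥ F2p + (G - Q) + mu2 / 2 * U + 1 / (2 * (L2 - mu2)) * (B - 2 * (mu2 * Q) + mu2 ^ 2 * U)) :
    (F1x - F2x) - (F1p - F2p) ≥
      (L2 - mu1) / (L2 * (L1 - mu1)) * ((1 : ℝ) / 2) * A +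
      (1 / L2) * (1 + mu1 * (L1 - L2) / (L2 * (L1 - mu1))) * ((1 : ℝ) / 2) * B := by
  have ht : 0 ≤ mu1 * (L1 - L2) / (L2 * (L1 - mu1)) :=
    div_nonneg (mul_nonneg hmu1 (by linarith)) (mul_pos hL2 hD1).le
  have h23 : ((-G + mu2 / 2 * U + 1 / (2 * (L2 - mu2)) * (B - 2 * (mu2 * Q) + mu2 ^ 2 * U))
      + ((G - Q) + mu2 / 2 * U + 1 / (2 * (L2 - mu2)) * (B - 2 * (mu2 * Q) + mu2 ^ 2 * U))) ≤ 0 := by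
    linarith [r2, r3]
  have h23t : mu1 * (L1 - L2) / (L2 * (L1 - mu1)) *
      ((-G + mu2 / 2 * U + 1 / (2 * (L2 - mu2)) * (B - 2 * (mu2 * Q) + mu2 ^ 2 * U))
      + ((G - Q) + mu2 / 2 * U + 1 / (2 * (L2 - mu2)) * (B - 2 * (mu2 * Q) + mu2 ^ 2 * U))) ≤ 0 :=
    mul_nonpos_of_nonneg_of_nonpos ht h23
  have hde : 0 ≤ mu1 / (2 * L2 * (L1 - mu1)) * (A - 2 * (L2 * P) + L2 ^ 2 * U) :=
    mul_nonneg (div_nonneg hmu1 (by positivity)) hS1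
  have hep : 0 ≤ (mu1 * (L1 - L2) * (L2 + mu2) + mu2 * L2 * (L1 - mu1)) /
      (2 * L2 ^ 2 * (L1 - mu1) * (L2 - mu2)) * (B - 2 * (L2 * Q) + L2 ^ 2 * U) :=
    mul_nonneg (div_nonneg hN (by positivity)) hS2
  have hkey : (G + mu1 / 2 * U + 1 / (2 * (L1 - mu1)) * (A - 2 * (mu1 * P) + mu1 ^ 2 * U))
      + (-G + mu2 / 2 * U + 1 / (2 * (L2 - mu2)) * (B - 2 * (mu2 * Q) + mu2 ^ 2 * U))
      + mu1 * (L1 - L2) / (L2 * (L1 - mu1)) *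
        ((-G + mu2 / 2 * U + 1 / (2 * (L2 - mu2)) * (B - 2 * (mu2 * Q) + mu2 ^ 2 * U))
        + ((G - Q) + mu2 / 2 * U + 1 / (2 * (L2 - mu2)) * (B - 2 * (mu2 * Q) + mu2 ^ 2 * U)))
      = (L2 - mu1) / (L2 * (L1 - mu1)) * ((1 : ℝ) / 2) * A +
        (1 / L2) * (1 + mu1 * (L1 - L2) / (L2 * (L1 - mu1))) * ((1 : ℝ) / 2) * B
        + mu1 / (2 * L2 * (L1 - mu1)) * (A - 2 * (L2 * P) + L2 ^ 2 * U)
        + (mu1 * (L1 - L2) * (L2 + mu2) + mu2 * L2 * (L1 - mu1)) /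
          (2 * L2 ^ 2 * (L1 - mu1) * (L2 - mu2)) * (B - 2 * (L2 * Q) + L2 ^ 2 * U) := by
    field_simp
    ring
  linarith [r1, r2, h23t, hde, hep, hkey]

/-- The regularity condition gives nonnegativity of the key coefficient. -/
lemma hN_aux (mu1 mu2 L1 L2 : ℝ)
    (h1 : L2 ≤ L1) (h2 : mu1 < L2) (h3 : 0 ≤ mu1) (h4 : mu2 < L2) (hL2 : 0 < L2)
    (hreg : 0 ≤ mu2 ∨
      (-mu2 < mu1 ∧ 0 < -mu2 ∧
        1 / mu1 + 1 / mu2 + 1 / L2 ≤ (1 / L1) * (2 + L2 / mu2))) :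
    0 ≤ mu1 * (L1 - L2) * (L2 + mu2) + mu2 * L2 * (L1 - mu1) := by
  rcases hreg with hmu2 | ⟨hm1, hm2, hineq⟩
  · have t1 : 0 ≤ mu1 * (L1 - L2) * (L2 + mu2) :=
      mul_nonneg (mul_nonneg h3 (by linarith)) (by linarith)
    have t2 : 0 ≤ mu2 * L2 * (L1 - mu1) :=
      mul_nonneg (mul_nonneg hmu2 hL2.le) (by linarith)
    linarith
  · have hmu1pos : 0 < mu1 := lt_trans hm2 hm1
    have hmu2neg : mu2 < 0 := by linarith
    have hL1pos : 0 < L1 := by linarith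
    have hc : 0 < mu1 * (-mu2) * L2 * L1 :=
      mul_pos (mul_pos (mul_pos hmu1pos (by linarith)) hL2) hL1pos
    have hmu1ne : mu1 ≠ 0 := ne_of_gt hmu1pos
    have hmu2ne : mu2 ≠ 0 := ne_of_lt hmu2neg
    have hL1ne : L1 ≠ 0 := ne_of_gt hL1pos
    have hL2ne : L2 ≠ 0 := ne_of_gt hL2
    have key := mul_le_mul_of_nonneg_left hineq hc.le
    have e1 : mu1 * (-mu2) * L2 * L1 * (1 / mu1 + 1 / mu2 + 1 / L2)
        = -(mu2 * L2 * L1) - mu1 * L2 * L1 - mu1 * mu2 * L1 := by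
      field_simp
      ring
    have e2 : mu1 * (-mu2) * L2 * L1 * ((1 / L1) * (2 + L2 / mu2))
        = -(2 * mu1 * mu2 * L2) - mu1 * L2 ^ 2 := by
      field_simp
      ring
    rw [e1, e2] at key
    nlinarith [key]

/-- one-step decrease, regime p1. -/
theorem dca_one_step_p1
    (mu1 mu2 L1 L2 : ℝ)
    (h1 : L2 ≤ L1) (h2 : mu1 < L2) (h3 : 0 ≤ mu1) (h4 : mu2 < L2)
    (hreg : 0 ≤ mu2 ∨
      (-mu2 < mu1 ∧ 0 < -mu2 ∧
        1 / mu1 + 1 / mu2 + 1 / L2 ≤ (1 / L1) * (2 + L2 / mu2)))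
    (f1 f2 : H → ℝ)
    (h1lo : HasLowerCurvature mu1 f1) (h1up : HasUpperCurvature L1 f1)
    (h2lo : HasLowerCurvature mu2 f2) (h2up : HasUpperCurvature L2 f2)
    (x xp g1 g2 g2p : H)
    (hg2 : IsSubgradient mu2 f2 x g2) (hg1p : IsSubgradient mu1 f1 xp g2)
    (hg1 : IsSubgradient mu1 f1 x g1) (hg2p : IsSubgradient mu2 f2 xp g2p) :
    (f1 x - f2 x) - (f1 xp - f2 xp) ≥
      (L2 - mu1) / (L2 * (L1 - mu1)) * ((1 : ℝ) / 2) * ‖g1 - g2‖ ^ 2 +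
      (1 / L2) * (1 + mu1 * (L1 - L2) / (L2 * (L1 - mu1))) * ((1 : ℝ) / 2) * ‖g2 - g2p‖ ^ 2 := by
  have hL2 : (0:ℝ) < L2 := lt_of_le_of_lt h3 h2
  have hD1 : (0:ℝ) < L1 - mu1 := by linarith
  have hD2 : (0:ℝ) < L2 - mu2 := by linarith
  have hmu1L1 : mu1 < L1 := by linarith
  have hA1 := interp_aux hmu1L1 h1up hg1 hg1p
  have hB1 := interp_aux h4 h2up hg2p hg2
  have hB2 := interp_aux h4 h2up hg2 hg2p
  -- scalar expansions
  have eA : ‖g1 - g2 - mu1 • (x - xp)‖ ^ 2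
      = ‖g1 - g2‖ ^ 2 - 2 * (mu1 * ⟪g1 - g2, x - xp⟫) + mu1 ^ 2 * ‖x - xp‖ ^ 2 := by
    rw [norm_sub_sq_real, real_inner_smul_right, norm_smul, Real.norm_eq_abs, mul_pow, sq_abs]
  have eB : ‖g2 - g2p - mu2 • (x - xp)‖ ^ 2
      = ‖g2 - g2p‖ ^ 2 - 2 * (mu2 * ⟪g2 - g2p, x - xp⟫) + mu2 ^ 2 * ‖x - xp‖ ^ 2 := by
    rw [norm_sub_sq_real, real_inner_smul_right, norm_smul, Real.norm_eq_abs, mul_pow, sq_abs]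
  have eB' : ‖g2p - g2 - mu2 • (xp - x)‖ ^ 2
      = ‖g2 - g2p‖ ^ 2 - 2 * (mu2 * ⟪g2 - g2p, x - xp⟫) + mu2 ^ 2 * ‖x - xp‖ ^ 2 := by
    have hv : g2p - g2 - mu2 • (xp - x) = -(g2 - g2p - mu2 • (x - xp)) := by
      module
    rw [hv, norm_neg, eB]
  have q1 : (⟪g2, xp - x⟫ : ℝ) = -⟪g2, x - xp⟫ := by
    rw [show xp - x = -(x - xp) from by abel, inner_neg_right]
  have q2 : ‖xp - x‖ ^ 2 = ‖x - xp‖ ^ 2 := by rw [norm_sub_rev]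
  have q3 : (⟪g2p, x - xp⟫ : ℝ) = ⟪g2, x - xp⟫ - ⟪g2 - g2p, x - xp⟫ := by
    rw [inner_sub_left]; ring
  rw [eA] at hA1
  rw [eB', q1, q2] at hB1
  rw [eB, q3] at hB2
  -- nonnegative squares
  have eS1 : ‖g1 - g2 - L2 • (x - xp)‖ ^ 2
      = ‖g1 - g2‖ ^ 2 - 2 * (L2 * ⟪g1 - g2, x - xp⟫) + L2 ^ 2 * ‖x - xp‖ ^ 2 := by
    rw [norm_sub_sq_real, real_inner_smul_right, norm_smul, Real.norm_eq_abs, mul_pow, sq_abs]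
  have eS2 : ‖g2 - g2p - L2 • (x - xp)‖ ^ 2
      = ‖g2 - g2p‖ ^ 2 - 2 * (L2 * ⟪g2 - g2p, x - xp⟫) + L2 ^ 2 * ‖x - xp‖ ^ 2 := by
    rw [norm_sub_sq_real, real_inner_smul_right, norm_smul, Real.norm_eq_abs, mul_pow, sq_abs]
  have hS1 : 0 ≤ ‖g1 - g2‖ ^ 2 - 2 * (L2 * ⟪g1 - g2, x - xp⟫) + L2 ^ 2 * ‖x - xp‖ ^ 2 := by
    rw [← eS1]; positivity
  have hS2 : 0 ≤ ‖g2 - g2p‖ ^ 2 - 2 * (L2 * ⟪g2 - g2p, x - xp⟫) + L2 ^ 2 * ‖x - xp‖ ^ 2 := by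
    rw [← eS2]; positivity
  have hN := hN_aux mu1 mu2 L1 L2 h1 h2 h3 h4 hL2 hreg
  exact combine_aux mu1 mu2 L1 L2 (‖x - xp‖ ^ 2) (‖g1 - g2‖ ^ 2) (‖g2 - g2p‖ ^ 2)
    (⟪g1 - g2, x - xp⟫) (⟪g2 - g2p, x - xp⟫) (⟪g2, x - xp⟫)
    (f1 x) (f1 xp) (f2 x) (f2 xp)
    hL2 hD1 hD2 h3 h1 hN hS1 hS2 (by linarith [hA1]) (by linarith [hB1]) (by linarith [hB2])
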